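/- Let R > r > 0. The Villarceau circle γ(t) = (√(R² − r²)·cos t, r + R·sin t, r·cos t) on the torus with radii R, r makes constant angles with the latitude circles and with the meridian circles, with cosines √(R² − r²)/R and r/R respectively (in absolute value). These two angles are equal if and only if R² = 2r², i.e. R = √2·r, and in that case both angles equal 45 degrees (both cosines equal √2/2). -/

import Mathlib

open Real

/-- The point `(x, y, z)` of Euclidean 3-space. -/
noncomputable def pt (x y z : ℝ) : EuclideanSpace ℝ (Fin 3) :=
  (WithLp.equiv 2 (Fin 3 → ℝ)).symm ![x, y, z]

/-- The torus of revolution with major radius `R` and minor radius `r`: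
`T = {(x, y, z) : (√(x² + y²) − R)² + z² = r²}`. -/
def torus (R r : ℝ) : Set (EuclideanSpace ℝ (Fin 3)) :=
  {p | (Real.sqrt ((p 0) ^ 2 + (p 1) ^ 2) - R) ^ 2 + (p 2) ^ 2 = r ^ 2}

/-- The bitangent plane `P = {(x, y, z) : √(R² − r²)·z = r·x}`. -/
def bitangentPlane (R r : ℝ) : Set (EuclideanSpace ℝ (Fin 3)) :=
  {p | Real.sqrt (R ^ 2 - r ^ 2) * p 2 = r * p 0}

/-- The Villarceau circle `γ(t) = (√(R² − r²)·cos t, r + R·sin t, r·cos t)`. -/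
noncomputable def villarceau (R r : ℝ) (t : ℝ) : EuclideanSpace ℝ (Fin 3) :=
  pt (Real.sqrt (R ^ 2 - r ^ 2) * Real.cos t) (r + R * Real.sin t) (r * Real.cos t)

open RealInnerProductSpace

/-- The tangent direction `(−y, x, 0)` of the latitude circle through `(x, y, z)`. -/
noncomputable def latitudeTangent (p : EuclideanSpace ℝ (Fin 3)) : EuclideanSpace ℝ (Fin 3) :=
  pt (-(p 1)) (p 0) 0

/-- The unit tangent vector to the meridian circle of the torus through `γ(t)`. -/
noncomputable def meridianTangent (R r : ℝ) (t : ℝ) : EuclideanSpace ℝ (Fin 3) :=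
  pt (-Real.cos t * (Real.sqrt (R ^ 2 - r ^ 2) * Real.cos t / (R + r * Real.sin t)))
     (-Real.cos t * ((r + R * Real.sin t) / (R + r * Real.sin t)))
     (Real.sin t)

lemma norm_pt (x y z : ℝ) : ‖pt x y z‖ = Real.sqrt (x ^ 2 + y ^ 2 + z ^ 2) := by
  simp [pt, EuclideanSpace.norm_eq, Fin.sum_univ_three]

lemma inner_pt (x y z a b c : ℝ) : ⟪pt x y z, pt a b c⟫ = x * a + y * b + z * c := by
  simp [pt, PiLp.inner_apply, Fin.sum_univ_three]
  ring

lemma hasDerivAt_villarceau (R r t : ℝ) :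
    HasDerivAt (villarceau R r)
      (pt (-(Real.sqrt (R ^ 2 - r ^ 2)) * Real.sin t) (R * Real.cos t) (-r * Real.sin t)) t := by
  have h : HasDerivAt (fun t => (fun i => villarceau R r t i : Fin 3 → ℝ))
      (fun i => pt (-(Real.sqrt (R ^ 2 - r ^ 2)) * Real.sin t) (R * Real.cos t)
        (-r * Real.sin t) i) t := by
    rw [hasDerivAt_pi]
    intro i
    fin_cases i <;> simp [villarceau, pt] <;>
    · first
      | exact ((Real.hasDerivAt_cos t).const_mul _).congr_deriv (by ring)
      | exact ((Real.hasDerivAt_sin t).const_mul _).const_add _ |>.congr_deriv (by ring)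
      | exact (Real.hasDerivAt_sin t).const_mul _
  exact ((PiLp.continuousLinearEquiv 2 ℝ (fun _ : Fin 3 => ℝ)).symm.hasFDerivAt.comp_hasDerivAt
    t h :)

/-- For `R > r > 0`, the Villarceau circle makes constant angles with the latitude circles and
with the meridian circles, with cosines `√(R² − r²)/R` and `r/R` respectively (in absolute
value).  These two angles are equal if and only if `R² = 2r²`, i.e. `R = √2·r`, and in that
case both angles equal `45` degrees (both cosines equal `√2/2`). -/
theorem villarceau_goldilocks (R r : ℝ) (hr : 0 < r) (hR : r < R) :
    (∀ t : ℝ,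
      ⟪deriv (villarceau R r) t, latitudeTangent (villarceau R r t)⟫ /
          (‖deriv (villarceau R r) t‖ * ‖latitudeTangent (villarceau R r t)‖) =
        Real.sqrt (R ^ 2 - r ^ 2) / R) ∧
    (∀ t : ℝ,
      |⟪deriv (villarceau R r) t, meridianTangent R r t⟫ /
          (‖deriv (villarceau R r) t‖ * ‖meridianTangent R r t‖)| = r / R) ∧
    (Real.sqrt (R ^ 2 - r ^ 2) / R = r / R ↔ R ^ 2 = 2 * r ^ 2) ∧
    (R ^ 2 = 2 * r ^ 2 ↔ R = Real.sqrt 2 * r) ∧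
    (R = Real.sqrt 2 * r →
      Real.sqrt (R ^ 2 - r ^ 2) / R = Real.sqrt 2 / 2 ∧
      r / R = Real.sqrt 2 / 2 ∧
      Real.arccos (Real.sqrt (R ^ 2 - r ^ 2) / R) = Real.pi / 4 ∧
      Real.arccos (r / R) = Real.pi / 4) := by
  have hR0 : 0 < R := hr.trans hR
  set a := Real.sqrt (R ^ 2 - r ^ 2) with ha_def
  have ha2 : a ^ 2 = R ^ 2 - r ^ 2 := Real.sq_sqrt (by nlinarith)
  have ha0 : 0 ≤ a := Real.sqrt_nonneg _
  have hderiv : ∀ t, deriv (villarceau R r) t =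
      pt (-a * Real.sin t) (R * Real.cos t) (-r * Real.sin t) :=
    fun t => (hasDerivAt_villarceau R r t).deriv
  have hnd : ∀ t, ‖deriv (villarceau R r) t‖ = R := by
    intro t
    rw [hderiv, norm_pt]
    have := Real.sin_sq_add_cos_sq t
    rw [show (-a * Real.sin t) ^ 2 + (R * Real.cos t) ^ 2 + (-r * Real.sin t) ^ 2 = R ^ 2 by
      nlinarith]
    exact Real.sqrt_sq hR0.le
  have hden : ∀ t, 0 < R + r * Real.sin t := by
    intro t
    nlinarith [Real.neg_one_le_sin t]
  refine ⟨?_, ?_, ?_, ?_, ?_⟩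
  · intro t
    have hlat : latitudeTangent (villarceau R r t) =
        pt (-(r + R * Real.sin t)) (a * Real.cos t) 0 := rfl
    have hnl : ‖latitudeTangent (villarceau R r t)‖ = R + r * Real.sin t := by
      rw [hlat, norm_pt]
      have := Real.sin_sq_add_cos_sq t
      rw [show (-(r + R * Real.sin t)) ^ 2 + (a * Real.cos t) ^ 2 + (0:ℝ) ^ 2 =
          (R + r * Real.sin t) ^ 2 by nlinarith]
      exact Real.sqrt_sq (hden t).le
    have hin : ⟪deriv (villarceau R r) t, latitudeTangent (villarceau R r t)⟫ =
        a * (R + r * Real.sin t) := by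
      rw [hderiv, hlat, inner_pt]
      have h1 := Real.sin_sq_add_cos_sq t
      linear_combination (a * R) * h1
    rw [hin, hnd, hnl]
    rw [div_eq_div_iff (mul_pos hR0 (hden t)).ne' hR0.ne']
    ring
  · intro t
    have hd := (hden t).ne'
    have key : a ^ 2 * Real.cos t ^ 2 + (r + R * Real.sin t) ^ 2 =
        (R + r * Real.sin t) ^ 2 := by
      have := Real.sin_sq_add_cos_sq t
      nlinarith
    have hnm : ‖meridianTangent R r t‖ = 1 := by
      rw [meridianTangent, norm_pt]
      rw [show (-Real.cos t * (a * Real.cos t / (R + r * Real.sin t))) ^ 2 +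
          (-Real.cos t * ((r + R * Real.sin t) / (R + r * Real.sin t))) ^ 2 +
          Real.sin t ^ 2 = 1 by
        have := Real.sin_sq_add_cos_sq t
        field_simp
        nlinarith]
      exact Real.sqrt_one
    have hin : ⟪deriv (villarceau R r) t, meridianTangent R r t⟫ = -r := by
      rw [hderiv, meridianTangent, inner_pt, ← ha_def]
      have h1 := Real.sin_sq_add_cos_sq t
      field_simp
      have hd' : R + Real.sin t * r ≠ 0 := by rw [mul_comm]; exact hd
      rw [div_add' _ _ _ hd', div_eq_iff hd']
      linear_combination (Real.sin t * Real.cos t ^ 2) * ha2 + (-r * (R + r * Real.sin t)) * h1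
    rw [hin, hnd, hnm, mul_one, abs_div, abs_neg, abs_of_pos hr, abs_of_pos hR0]
  · constructor
    · intro h
      have : a = r := by
        field_simp at h
        exact h
      nlinarith
    · intro h
      have : a = r := by
        rw [ha_def, h, show 2 * r ^ 2 - r ^ 2 = r ^ 2 by ring, Real.sqrt_sq hr.le]
      rw [this]
  · constructor
    · intro h
      have : R = Real.sqrt (2 * r ^ 2) := by
        rw [← h, Real.sqrt_sq hR0.le]
      rw [this, show 2 * r ^ 2 = 2 * r ^ 2 by ring, Real.sqrt_mul (by norm_num),
        Real.sqrt_sq hr.le]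
    · intro h
      rw [h]
      rw [mul_pow, Real.sq_sqrt (by norm_num : (2:ℝ) ≥ 0)]
  · intro h
    have hR2 : R ^ 2 = 2 * r ^ 2 := by
      rw [h, mul_pow, Real.sq_sqrt (by norm_num : (2:ℝ) ≥ 0)]
    have har : a = r := by
      rw [ha_def, hR2, show 2 * r ^ 2 - r ^ 2 = r ^ 2 by ring, Real.sqrt_sq hr.le]
    have hval : r / R = Real.sqrt 2 / 2 := by
      rw [h]
      rw [div_eq_div_iff (by positivity) (by norm_num)]
      have : Real.sqrt 2 * Real.sqrt 2 = 2 := Real.mul_self_sqrt (by norm_num)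
      nlinarith
    have harc : Real.arccos (Real.sqrt 2 / 2) = Real.pi / 4 := by
      rw [← Real.cos_pi_div_four, Real.arccos_cos (by positivity)
        (by linarith [Real.pi_pos])]
    exact ⟨by rw [har, hval], hval, by rw [har, hval, harc], by rw [hval, harc]⟩
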